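/- arXiv:2512.14007 — 2 statements merged into one kernel-verified Lean document; each statement's English description precedes it below -/
import Mathlib

section
/- Let (a,b) be a perplex parameter and let f : ℝ² → ℝ² be ℙ_{a,b}-differentiable with derivative f'. Then for every x ∈ ℝ², the real differential Df(x) : ℝ² → ℝ² (the Fréchet derivative of f as a real map) fails to be invertible if and only if f'(x) is not invertible for *, equivalently if and only if N(f'(x)) = 0, where N(y) := (a₁b₂ − a₂b₁)y₁² + (a₁b₃ − a₃b₁)y₁y₂ − (a₁a₃ − a₂²)y₂². -/
open Filter Topology

noncomputable section

/-- The perplex product on `ℝ²` determined by the parameters `a = (a₁,a₂,a₃)`,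
`b = (b₁,b₂,b₃)`. -/
def pmul (a₁ a₂ a₃ b₁ b₂ b₃ : ℝ) (x y : ℝ × ℝ) : ℝ × ℝ :=
  (a₁ * x.1 * y.1 + a₂ * (x.1 * y.2 + x.2 * y.1) + a₃ * x.2 * y.2,
   b₁ * x.1 * y.1 + b₂ * (x.1 * y.2 + x.2 * y.1) + b₃ * x.2 * y.2)

/-- `(a,b)` is a perplex parameter: conditions (i)-(iv). -/
def IsPerplexParam (a₁ a₂ a₃ b₁ b₂ b₃ : ℝ) : Prop :=
  a₁ * a₃ - a₂ ^ 2 ≠ 0 ∧ a₁ * b₂ - a₂ * b₁ ≠ 0 ∧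
    a₂ * b₂ - a₃ * b₁ = 0 ∧ a₁ * a₃ - a₂ ^ 2 + a₂ * b₃ - a₃ * b₂ = 0

/-- The multiplicative identity `𝟙` of the perplex algebra. -/
def pone (a₁ a₂ b₁ b₂ : ℝ) : ℝ × ℝ :=
  (1 / (a₁ * b₂ - a₂ * b₁)) • ((b₂, -b₁) : ℝ × ℝ)

/-- The perplex norm `N`. -/
def pN (a₁ a₂ a₃ b₁ b₂ b₃ : ℝ) (x : ℝ × ℝ) : ℝ :=
  (a₁ * b₂ - a₂ * b₁) * x.1 ^ 2 + (a₁ * b₃ - a₃ * b₁) * x.1 * x.2 -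
    (a₁ * a₃ - a₂ ^ 2) * x.2 ^ 2

/-- The Euclidean norm on `ℝ²`. -/
noncomputable def enorm2 (x : ℝ × ℝ) : ℝ := Real.sqrt (x.1 ^ 2 + x.2 ^ 2)

open Classical in
/-- The `*`-inverse of `x` (junk value `0` if `x` is not invertible). -/
noncomputable def pinv (a₁ a₂ a₃ b₁ b₂ b₃ : ℝ) (x : ℝ × ℝ) : ℝ × ℝ :=
  if h : ∃ y, pmul a₁ a₂ a₃ b₁ b₂ b₃ x y = pone a₁ a₂ b₁ b₂ then h.choose else 0

/-- A sequence of invertible elements converging to `0` that is positively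
separated from the zero-divisor directions. -/
def PosSep (a₁ a₂ a₃ b₁ b₂ b₃ : ℝ) (h : ℕ → ℝ × ℝ) : Prop :=
  (∀ n, ∃ y, pmul a₁ a₂ a₃ b₁ b₂ b₃ (h n) y = pone a₁ a₂ b₁ b₂) ∧
    Tendsto h atTop (nhds 0) ∧
      ∃ c > 0, ∀ n, c ≤ |pN a₁ a₂ a₃ b₁ b₂ b₃ ((enorm2 (h n))⁻¹ • h n)|

/-- `f` is `ℙ_{a,b}`-differentiable with (continuous) derivative `f'`. -/
def PDiff (a₁ a₂ a₃ b₁ b₂ b₃ : ℝ) (f f' : ℝ × ℝ → ℝ × ℝ) : Prop :=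
  Continuous f' ∧
    ∀ x, ∀ h : ℕ → ℝ × ℝ, PosSep a₁ a₂ a₃ b₁ b₂ b₃ h →
      Tendsto
        (fun n => pmul a₁ a₂ a₃ b₁ b₂ b₃ (f (x + h n) - f x)
          (pinv a₁ a₂ a₃ b₁ b₂ b₃ (h n)))
        atTop (nhds (f' x))

section Alg

variable {a₁ a₂ a₃ b₁ b₂ b₃ : ℝ}

lemma hQ (hp : IsPerplexParam a₁ a₂ a₃ b₁ b₂ b₃) : a₁ * a₃ - a₂ ^ 2 ≠ 0 := hp.1
lemma hDne (hp : IsPerplexParam a₁ a₂ a₃ b₁ b₂ b₃) : a₁ * b₂ - a₂ * b₁ ≠ 0 := hp.2.1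
lemma h3 (hp : IsPerplexParam a₁ a₂ a₃ b₁ b₂ b₃) : a₂ * b₂ - a₃ * b₁ = 0 := hp.2.2.1
lemma h4 (hp : IsPerplexParam a₁ a₂ a₃ b₁ b₂ b₃) : a₁ * a₃ - a₂ ^ 2 + a₂ * b₃ - a₃ * b₂ = 0 := hp.2.2.2

/-- Derived identity: `b₂² - b₁ b₃ = a₁ b₂ - a₂ b₁`. -/
lemma hDer (hp : IsPerplexParam a₁ a₂ a₃ b₁ b₂ b₃) : b₂ ^ 2 - b₁ * b₃ = a₁ * b₂ - a₂ * b₁ := by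
  rcases eq_or_ne a₂ 0 with h | h
  · subst h
    have ha3 : a₃ ≠ 0 := by
      intro h'; apply hQ hp; rw [h']; ring
    have hb1 : b₁ = 0 := by
      have h' := h3 hp
      have : a₃ * b₁ = 0 := by linarith
      rcases mul_eq_zero.1 this with h'' | h''
      · exact absurd h'' ha3
      · exact h''
    have hb2 : b₂ = a₁ := by
      have h4' := h4 hp
      rw [hb1] at *
      have : a₃ * (a₁ - b₂) = 0 := by linear_combination h4'
      rcases mul_eq_zero.1 this with h' | h'
      · exact absurd h' ha3
      · linarith
    rw [hb1, hb2]; ring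
  · have key : a₂ * (b₂ ^ 2 - b₁ * b₃ - (a₁ * b₂ - a₂ * b₁)) = 0 := by
      linear_combination (-b₁) * h4 hp + (b₂ - a₁) * h3 hp
    have := mul_eq_zero.1 key
    rcases this with h' | h'
    · exact absurd h' h
    · linarith

lemma pmul_comm (x y : ℝ × ℝ) : pmul a₁ a₂ a₃ b₁ b₂ b₃ x y = pmul a₁ a₂ a₃ b₁ b₂ b₃ y x := by
  simp only [pmul, Prod.mk.injEq]; constructor <;> ring

lemma pone_def : pone a₁ a₂ b₁ b₂ =
    (b₂ / (a₁ * b₂ - a₂ * b₁), -b₁ / (a₁ * b₂ - a₂ * b₁)) := by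
  simp [pone, Prod.smul_mk, smul_eq_mul]; constructor <;> ring

lemma pone_ne_zero (hp : IsPerplexParam a₁ a₂ a₃ b₁ b₂ b₃) : pone a₁ a₂ b₁ b₂ ≠ 0 := by
  rw [pone_def]
  intro h
  rw [Prod.ext_iff] at h
  obtain ⟨h1', h2'⟩ := h
  simp only [Prod.fst_zero, Prod.snd_zero, div_eq_zero_iff, neg_eq_zero] at h1' h2'
  have hb2 : b₂ = 0 := by rcases h1' with h | h; exact h; exact absurd h (hDne hp)
  have hb1 : b₁ = 0 := by rcases h2' with h | h; exact h; exact absurd h (hDne hp)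
  exact hDne hp (by rw [hb1, hb2]; ring)

lemma pone_mul (hp : IsPerplexParam a₁ a₂ a₃ b₁ b₂ b₃) (z : ℝ × ℝ) : pmul a₁ a₂ a₃ b₁ b₂ b₃ (pone a₁ a₂ b₁ b₂) z = z := by
  have hD := hDne hp
  rw [pone_def]
  simp only [pmul]
  ext
  · field_simp
    linear_combination z.2 * h3 hp
  · field_simp
    rw [div_eq_iff (by intro h; apply hD; linarith)]
    linear_combination z.2 * hDer hp

lemma pmul_assoc (hp : IsPerplexParam a₁ a₂ a₃ b₁ b₂ b₃) (x y z : ℝ × ℝ) :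
    pmul a₁ a₂ a₃ b₁ b₂ b₃ (pmul a₁ a₂ a₃ b₁ b₂ b₃ x y) z =
      pmul a₁ a₂ a₃ b₁ b₂ b₃ x (pmul a₁ a₂ a₃ b₁ b₂ b₃ y z) := by
  simp only [pmul]
  ext
  · simp only
    linear_combination (-(x.1*y.1*z.2) + x.2*y.1*z.1) * h3 hp +
      (-(x.1*y.2*z.2) + x.2*y.2*z.1) * h4 hp
  · simp only
    linear_combination (x.1*y.2*z.2 - x.2*y.2*z.1) * h3 hp +
      (-(x.1*y.1*z.2) + x.2*y.1*z.1) * hDer hp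

end Alg

section Alg2

variable {a₁ a₂ a₃ b₁ b₂ b₃ : ℝ}

/-- candidate zero divisor associated to `c` -/
def zel (a₁ a₂ a₃ : ℝ) (c : ℝ × ℝ) : ℝ × ℝ :=
  (a₂ * c.1 + a₃ * c.2, -(a₁ * c.1 + a₂ * c.2))

lemma pmul_zel (hp : IsPerplexParam a₁ a₂ a₃ b₁ b₂ b₃) (c : ℝ × ℝ) :
    pmul a₁ a₂ a₃ b₁ b₂ b₃ c (zel a₁ a₂ a₃ c) = (0, -pN a₁ a₂ a₃ b₁ b₂ b₃ c) := by
  simp only [pmul, zel, pN, Prod.mk.injEq]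
  constructor
  · ring
  · linear_combination (-c.2 ^ 2) * h4 hp

lemma zel_eq_zero (hp : IsPerplexParam a₁ a₂ a₃ b₁ b₂ b₃) {c : ℝ × ℝ}
    (h : zel a₁ a₂ a₃ c = 0) : c = 0 := by
  have hQ' := hQ hp
  rw [Prod.ext_iff] at h
  obtain ⟨h1, h2⟩ := h
  simp only [zel, Prod.fst_zero, Prod.snd_zero, neg_eq_zero] at h1 h2
  have e1 : (a₁ * a₃ - a₂ ^ 2) * c.1 = 0 := by linear_combination a₃ * h2 - a₂ * h1
  have e2 : (a₁ * a₃ - a₂ ^ 2) * c.2 = 0 := by linear_combination a₁ * h1 - a₂ * h2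
  have : c.1 = 0 := by rcases mul_eq_zero.1 e1 with h | h; exact absurd h hQ'; exact h
  have : c.2 = 0 := by
    rcases mul_eq_zero.1 e2 with h | h; exact absurd h hQ'; exact h
  ext <;> simp_all

lemma pmul_zero_right (x : ℝ × ℝ) : pmul a₁ a₂ a₃ b₁ b₂ b₃ x 0 = 0 := by
  simp [pmul]

lemma pmul_zero_left (y : ℝ × ℝ) : pmul a₁ a₂ a₃ b₁ b₂ b₃ 0 y = 0 := by
  simp [pmul]

lemma pmul_smul_right (x y : ℝ × ℝ) (s : ℝ) :
    pmul a₁ a₂ a₃ b₁ b₂ b₃ x (s • y) = s • pmul a₁ a₂ a₃ b₁ b₂ b₃ x y := by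
  simp only [pmul, Prod.smul_mk, Prod.smul_fst, Prod.smul_snd, smul_eq_mul, Prod.mk.injEq]
  constructor <;> ring

lemma pmul_smul_left (x y : ℝ × ℝ) (s : ℝ) :
    pmul a₁ a₂ a₃ b₁ b₂ b₃ (s • x) y = s • pmul a₁ a₂ a₃ b₁ b₂ b₃ x y := by
  rw [pmul_comm, pmul_smul_right, pmul_comm]

lemma pmul_W (hp : IsPerplexParam a₁ a₂ a₃ b₁ b₂ b₃) (c : ℝ × ℝ) :
    pmul a₁ a₂ a₃ b₁ b₂ b₃ c
      (b₂ * (b₂ * c.1 + b₃ * c.2) + b₁ * (a₂ * c.1 + a₃ * c.2),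
       -(b₂ * (b₁ * c.1 + b₂ * c.2) + b₁ * (a₁ * c.1 + a₂ * c.2))) =
      pN a₁ a₂ a₃ b₁ b₂ b₃ c • (b₂, -b₁) := by
  simp only [pmul, pN, Prod.smul_mk, smul_eq_mul, Prod.mk.injEq]
  constructor
  · linear_combination (b₂ * c.2 ^ 2) * h4 hp
  · linear_combination (-b₁ * c.2 ^ 2) * h4 hp

lemma exists_inv_of_pN (hp : IsPerplexParam a₁ a₂ a₃ b₁ b₂ b₃) {c : ℝ × ℝ}
    (hN : pN a₁ a₂ a₃ b₁ b₂ b₃ c ≠ 0) :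
    ∃ y, pmul a₁ a₂ a₃ b₁ b₂ b₃ c y = pone a₁ a₂ b₁ b₂ := by
  have hD := hDne hp
  refine ⟨(1 / ((a₁ * b₂ - a₂ * b₁) * pN a₁ a₂ a₃ b₁ b₂ b₃ c)) •
    (b₂ * (b₂ * c.1 + b₃ * c.2) + b₁ * (a₂ * c.1 + a₃ * c.2),
     -(b₂ * (b₁ * c.1 + b₂ * c.2) + b₁ * (a₁ * c.1 + a₂ * c.2))), ?_⟩
  rw [pmul_smul_right, pmul_W hp, pone, smul_smul]
  congr 1
  field_simp
end Alg2

section Alg3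

variable {a₁ a₂ a₃ b₁ b₂ b₃ : ℝ}

lemma mul_pone (hp : IsPerplexParam a₁ a₂ a₃ b₁ b₂ b₃) (x : ℝ × ℝ) :
    pmul a₁ a₂ a₃ b₁ b₂ b₃ x (pone a₁ a₂ b₁ b₂) = x := by
  rw [pmul_comm]; exact pone_mul hp x

lemma pinv_unique (hp : IsPerplexParam a₁ a₂ a₃ b₁ b₂ b₃) {c y y' : ℝ × ℝ}
    (hy : pmul a₁ a₂ a₃ b₁ b₂ b₃ c y = pone a₁ a₂ b₁ b₂)
    (hy' : pmul a₁ a₂ a₃ b₁ b₂ b₃ c y' = pone a₁ a₂ b₁ b₂) : y = y' := by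
  calc y = pmul a₁ a₂ a₃ b₁ b₂ b₃ (pone a₁ a₂ b₁ b₂) y := (pone_mul hp y).symm
    _ = pmul a₁ a₂ a₃ b₁ b₂ b₃ (pmul a₁ a₂ a₃ b₁ b₂ b₃ c y') y := by rw [hy']
    _ = pmul a₁ a₂ a₃ b₁ b₂ b₃ y' (pmul a₁ a₂ a₃ b₁ b₂ b₃ c y) := by
        rw [pmul_comm c y', pmul_assoc hp]
    _ = pmul a₁ a₂ a₃ b₁ b₂ b₃ y' (pone a₁ a₂ b₁ b₂) := by rw [hy]
    _ = y' := mul_pone hp y'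

lemma not_exists_inv (hp : IsPerplexParam a₁ a₂ a₃ b₁ b₂ b₃) {c : ℝ × ℝ}
    (hN : pN a₁ a₂ a₃ b₁ b₂ b₃ c = 0) :
    ¬ ∃ y, pmul a₁ a₂ a₃ b₁ b₂ b₃ c y = pone a₁ a₂ b₁ b₂ := by
  rintro ⟨y, hy⟩
  rcases eq_or_ne c 0 with rfl | hc
  · rw [pmul_zero_left] at hy
    exact pone_ne_zero hp hy.symm
  · set z := zel a₁ a₂ a₃ c with hz_def
    have hz : z ≠ 0 := fun h => hc (zel_eq_zero hp h)
    have hcz : pmul a₁ a₂ a₃ b₁ b₂ b₃ c z = 0 := by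
      rw [hz_def, pmul_zel hp, hN]; simp
    apply hz
    calc z = pmul a₁ a₂ a₃ b₁ b₂ b₃ (pone a₁ a₂ b₁ b₂) z := (pone_mul hp z).symm
      _ = pmul a₁ a₂ a₃ b₁ b₂ b₃ (pmul a₁ a₂ a₃ b₁ b₂ b₃ c y) z := by rw [hy]
      _ = pmul a₁ a₂ a₃ b₁ b₂ b₃ y (pmul a₁ a₂ a₃ b₁ b₂ b₃ c z) := by
          rw [pmul_comm c y, pmul_assoc hp]
      _ = 0 := by rw [hcz, pmul_zero_right]

lemma inv_iff (hp : IsPerplexParam a₁ a₂ a₃ b₁ b₂ b₃) (c : ℝ × ℝ) :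
    (∃ y, pmul a₁ a₂ a₃ b₁ b₂ b₃ c y = pone a₁ a₂ b₁ b₂) ↔ pN a₁ a₂ a₃ b₁ b₂ b₃ c ≠ 0 := by
  constructor
  · intro h hN
    exact not_exists_inv hp hN h
  · exact fun h => exists_inv_of_pN hp h

lemma pinv_spec (hp : IsPerplexParam a₁ a₂ a₃ b₁ b₂ b₃) {c : ℝ × ℝ}
    (hN : pN a₁ a₂ a₃ b₁ b₂ b₃ c ≠ 0) :
    pmul a₁ a₂ a₃ b₁ b₂ b₃ c (pinv a₁ a₂ a₃ b₁ b₂ b₃ c) = pone a₁ a₂ b₁ b₂ := by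
  have h := exists_inv_of_pN hp hN
  rw [pinv, dif_pos h]
  exact h.choose_spec

lemma pN_smul (s : ℝ) (x : ℝ × ℝ) :
    pN a₁ a₂ a₃ b₁ b₂ b₃ (s • x) = s ^ 2 * pN a₁ a₂ a₃ b₁ b₂ b₃ x := by
  simp only [pN, Prod.smul_fst, Prod.smul_snd, smul_eq_mul]; ring

lemma pN_zero : pN a₁ a₂ a₃ b₁ b₂ b₃ 0 = 0 := by simp [pN]

lemma pinv_smul (hp : IsPerplexParam a₁ a₂ a₃ b₁ b₂ b₃) {v : ℝ × ℝ}
    (hv : pN a₁ a₂ a₃ b₁ b₂ b₃ v ≠ 0) {t : ℝ} (ht : t ≠ 0) :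
    pinv a₁ a₂ a₃ b₁ b₂ b₃ (t • v) = t⁻¹ • pinv a₁ a₂ a₃ b₁ b₂ b₃ v := by
  have hNt : pN a₁ a₂ a₃ b₁ b₂ b₃ (t • v) ≠ 0 := by
    rw [pN_smul]
    exact mul_ne_zero (pow_ne_zero 2 ht) hv
  refine pinv_unique hp (pinv_spec hp hNt) ?_
  rw [pmul_smul_right, pmul_smul_left, smul_smul, inv_mul_cancel₀ ht, one_smul]
  exact pinv_spec hp hv

lemma enorm2_pos {x : ℝ × ℝ} (hx : x ≠ 0) : 0 < enorm2 x := by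
  apply Real.sqrt_pos.2
  have : x.1 ≠ 0 ∨ x.2 ≠ 0 := by
    by_contra hcon
    push_neg at hcon
    exact hx (Prod.ext hcon.1 hcon.2)
  rcases this with h1 | h1 <;> nlinarith [sq_nonneg x.1, sq_nonneg x.2, pow_pos (abs_pos.2 h1) 2, sq_abs x.1, sq_abs x.2]

lemma enorm2_smul (s : ℝ) (x : ℝ × ℝ) : enorm2 (s • x) = |s| * enorm2 x := by
  simp only [enorm2, Prod.smul_fst, Prod.smul_snd, smul_eq_mul]
  rw [show (s * x.1) ^ 2 + (s * x.2) ^ 2 = s ^ 2 * (x.1 ^ 2 + x.2 ^ 2) by ring,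
    Real.sqrt_mul (sq_nonneg s), Real.sqrt_sq_eq_abs]

lemma posSep_smul (hp : IsPerplexParam a₁ a₂ a₃ b₁ b₂ b₃) {v : ℝ × ℝ}
    (hv : pN a₁ a₂ a₃ b₁ b₂ b₃ v ≠ 0) {t : ℕ → ℝ} (ht0 : ∀ n, t n ≠ 0)
    (htl : Tendsto t atTop (𝓝 0)) : PosSep a₁ a₂ a₃ b₁ b₂ b₃ (fun n => t n • v) := by
  have hv0 : v ≠ 0 := fun h => hv (h ▸ pN_zero)
  have he : 0 < enorm2 v := enorm2_pos hv0
  refine ⟨fun n => exists_inv_of_pN hp ?_, ?_, ?_⟩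
  · rw [pN_smul]; exact mul_ne_zero (pow_ne_zero 2 (ht0 n)) hv
  · simpa using htl.smul_const v
  · refine ⟨|pN a₁ a₂ a₃ b₁ b₂ b₃ v| / enorm2 v ^ 2, by positivity, fun n => ?_⟩
    rw [enorm2_smul, smul_smul, pN_smul, abs_mul]
    have h1 : |t n| ≠ 0 := abs_ne_zero.2 (ht0 n)
    have h2 : |((|t n| * enorm2 v)⁻¹ * t n) ^ 2| = (enorm2 v ^ 2)⁻¹ := by
      rw [abs_of_nonneg (sq_nonneg _)]
      field_simp
      rw [sq_abs]
    rw [h2, div_eq_mul_inv, mul_comm]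
  
end Alg3

section LmapSec

variable {a₁ a₂ a₃ b₁ b₂ b₃ : ℝ}

lemma pmul_add_right (x y z : ℝ × ℝ) :
    pmul a₁ a₂ a₃ b₁ b₂ b₃ x (y + z) =
      pmul a₁ a₂ a₃ b₁ b₂ b₃ x y + pmul a₁ a₂ a₃ b₁ b₂ b₃ x z := by
  simp only [pmul, Prod.fst_add, Prod.snd_add, Prod.mk_add_mk, Prod.mk.injEq]
  constructor <;> ring

/-- Multiplication by `c` as a continuous linear map. -/
noncomputable def Lmap (a₁ a₂ a₃ b₁ b₂ b₃ : ℝ) (c : ℝ × ℝ) : (ℝ × ℝ) →L[ℝ] (ℝ × ℝ) :=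
  LinearMap.toContinuousLinearMap
    { toFun := fun y => pmul a₁ a₂ a₃ b₁ b₂ b₃ c y
      map_add' := fun y z => pmul_add_right c y z
      map_smul' := fun s y => by simp [pmul_smul_right] }

@[simp] lemma Lmap_apply (c y : ℝ × ℝ) :
    Lmap a₁ a₂ a₃ b₁ b₂ b₃ c y = pmul a₁ a₂ a₃ b₁ b₂ b₃ c y := rfl

lemma bij_iff (hp : IsPerplexParam a₁ a₂ a₃ b₁ b₂ b₃) (c : ℝ × ℝ) :
    Function.Bijective (Lmap a₁ a₂ a₃ b₁ b₂ b₃ c) ↔ pN a₁ a₂ a₃ b₁ b₂ b₃ c ≠ 0 := by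
  constructor
  · intro hbij hN
    rcases eq_or_ne c 0 with rfl | hc
    · obtain ⟨u, hu⟩ := hbij.2 (pone a₁ a₂ b₁ b₂)
      rw [Lmap_apply, pmul_zero_left] at hu
      exact pone_ne_zero hp hu.symm
    · have hz : zel a₁ a₂ a₃ c ≠ 0 := fun h => hc (zel_eq_zero hp h)
      apply hz
      apply hbij.1
      rw [Lmap_apply, Lmap_apply, pmul_zel hp, hN, pmul_zero_right]
      simp
  · intro hN
    have hinj : Function.Injective (Lmap a₁ a₂ a₃ b₁ b₂ b₃ c) := by
      rw [injective_iff_map_eq_zero]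
      intro u hu
      rw [Lmap_apply] at hu
      have e1 : a₁ * c.1 * u.1 + a₂ * (c.1 * u.2 + c.2 * u.1) + a₃ * c.2 * u.2 = 0 := by
        have := congrArg Prod.fst hu; simpa [pmul] using this
      have e2 : b₁ * c.1 * u.1 + b₂ * (c.1 * u.2 + c.2 * u.1) + b₃ * c.2 * u.2 = 0 := by
        have := congrArg Prod.snd hu; simpa [pmul] using this
      have k1 : pN a₁ a₂ a₃ b₁ b₂ b₃ c * u.1 = 0 := by
        simp only [pN]
        linear_combination (b₂ * c.1 + b₃ * c.2) * e1 - (a₂ * c.1 + a₃ * c.2) * e2 +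
          (-(c.2 ^ 2 * u.1)) * h4 hp
      have k2 : pN a₁ a₂ a₃ b₁ b₂ b₃ c * u.2 = 0 := by
        simp only [pN]
        linear_combination (-(b₁ * c.1 + b₂ * c.2)) * e1 + (a₁ * c.1 + a₂ * c.2) * e2 +
          (-(c.2 ^ 2 * u.2)) * h4 hp
      have hu1 : u.1 = 0 := by
        rcases mul_eq_zero.1 k1 with h | h
        · exact absurd h hN
        · exact h
      have hu2 : u.2 = 0 := by
        rcases mul_eq_zero.1 k2 with h | h
        · exact absurd h hN
        · exact h
      exact Prod.ext hu1 hu2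
    have hinj' : Function.Injective (Lmap a₁ a₂ a₃ b₁ b₂ b₃ c).toLinearMap := hinj
    exact ⟨hinj, LinearMap.injective_iff_surjective.1 hinj'⟩

end LmapSec

section Analytic

variable {a₁ a₂ a₃ b₁ b₂ b₃ : ℝ} {f f' : ℝ × ℝ → ℝ × ℝ}

lemma pmul_continuous_left (v : ℝ × ℝ) :
    Continuous (fun w : ℝ × ℝ => pmul a₁ a₂ a₃ b₁ b₂ b₃ w v) := by
  unfold pmul
  fun_prop

lemma hasDerivAt_line_zero (hp : IsPerplexParam a₁ a₂ a₃ b₁ b₂ b₃)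
    (hdiff : PDiff a₁ a₂ a₃ b₁ b₂ b₃ f f') {v : ℝ × ℝ}
    (hv : pN a₁ a₂ a₃ b₁ b₂ b₃ v ≠ 0) (q : ℝ × ℝ) :
    HasDerivAt (fun s : ℝ => f (q + s • v)) (pmul a₁ a₂ a₃ b₁ b₂ b₃ (f' q) v) 0 := by
  rw [hasDerivAt_iff_tendsto_slope_zero]
  rw [tendsto_iff_seq_tendsto]
  intro u hu
  have hu0 : Tendsto u atTop (𝓝 0) := hu.mono_right nhdsWithin_le_nhds
  have hne : ∀ᶠ n in atTop, u n ≠ 0 :=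
    hu.eventually (by filter_upwards [self_mem_nhdsWithin] with y hy using hy)
  set u' : ℕ → ℝ := fun n => if u n = 0 then 1 else u n with hu'_def
  have ht0 : ∀ n, u' n ≠ 0 := by
    intro n
    simp only [hu'_def]
    split <;> simp_all
  have heq : u =ᶠ[atTop] u' := by
    filter_upwards [hne] with n hn
    simp [hu'_def, hn]
  have htl : Tendsto u' atTop (𝓝 0) := hu0.congr' heq
  have hps := posSep_smul hp hv ht0 htl
  have hT := hdiff.2 q _ hps
  have hT2 : Tendsto (fun n => (u' n)⁻¹ • (f (q + u' n • v) - f q)) atTop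
      (𝓝 (pmul a₁ a₂ a₃ b₁ b₂ b₃ (f' q) v)) := by
    have hcont := pmul_continuous_left (a₁ := a₁) (a₂ := a₂) (a₃ := a₃)
      (b₁ := b₁) (b₂ := b₂) (b₃ := b₃) v
    have hT' := (hcont.tendsto _).comp hT
    refine hT'.congr fun n => ?_
    show pmul a₁ a₂ a₃ b₁ b₂ b₃
      (pmul a₁ a₂ a₃ b₁ b₂ b₃ (f (q + u' n • v) - f q) (pinv a₁ a₂ a₃ b₁ b₂ b₃ (u' n • v))) v
        = _
    rw [pinv_smul hp hv (ht0 n), pmul_smul_right, pmul_smul_left, pmul_assoc hp,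
      pmul_comm (pinv a₁ a₂ a₃ b₁ b₂ b₃ v) v, pinv_spec hp hv, mul_pone hp]
  refine hT2.congr' ?_
  filter_upwards [heq] with n hn
  simp only [← hn, Function.comp_apply, zero_add, zero_smul, add_zero]

lemma hasDerivAt_line (hp : IsPerplexParam a₁ a₂ a₃ b₁ b₂ b₃)
    (hdiff : PDiff a₁ a₂ a₃ b₁ b₂ b₃ f f') {v : ℝ × ℝ}
    (hv : pN a₁ a₂ a₃ b₁ b₂ b₃ v ≠ 0) (x : ℝ × ℝ) (t₀ : ℝ) :
    HasDerivAt (fun t : ℝ => f (x + t • v))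
      (pmul a₁ a₂ a₃ b₁ b₂ b₃ (f' (x + t₀ • v)) v) t₀ := by
  have base := hasDerivAt_line_zero hp hdiff hv (x + t₀ • v)
  have hfun : (fun t : ℝ => f (x + t • v)) =
      (fun s : ℝ => f ((x + t₀ • v) + s • v)) ∘ (fun t : ℝ => t - t₀) := by
    funext t
    simp only [Function.comp_apply]
    congr 1
    rw [sub_smul]
    abel
  rw [hfun]
  have hinner : HasDerivAt (fun t : ℝ => t - t₀) 1 t₀ := (hasDerivAt_id t₀).sub_const t₀
  rw [show (0:ℝ) = t₀ - t₀ by ring] at base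
  have := base.scomp (x := t₀) (h := fun t : ℝ => t - t₀) hinner
  simpa using this

end Analytic

section Frechet

variable {a₁ a₂ a₃ b₁ b₂ b₃ : ℝ} {f f' : ℝ × ℝ → ℝ × ℝ}

lemma segment_est (hp : IsPerplexParam a₁ a₂ a₃ b₁ b₂ b₃)
    (hdiff : PDiff a₁ a₂ a₃ b₁ b₂ b₃ f f') {v : ℝ × ℝ}
    (hv : pN a₁ a₂ a₃ b₁ b₂ b₃ v ≠ 0) (q : ℝ × ℝ) (r : ℝ) (w : ℝ × ℝ) {C : ℝ}
    (hC : 0 ≤ C)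
    (hb : ∀ t ∈ Set.Icc (0:ℝ) 1, ‖pmul a₁ a₂ a₃ b₁ b₂ b₃ (f' (q + (t * r) • v)) v - w‖ ≤ C) :
    ‖f (q + r • v) - f q - r • w‖ ≤ C * |r| := by
  set G : ℝ → ℝ × ℝ := fun t => f (q + (t * r) • v) - (t * r) • w with hG_def
  have hG : ∀ t ∈ Set.Icc (0:ℝ) 1, HasDerivWithinAt G
      (r • (pmul a₁ a₂ a₃ b₁ b₂ b₃ (f' (q + (t * r) • v)) v - w)) (Set.Icc 0 1) t := by
    intro t _
    have h1 : HasDerivAt (fun s : ℝ => s * r) r t := hasDerivAt_mul_const r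
    have houter := hasDerivAt_line hp hdiff hv q (t * r)
    have h2 : HasDerivAt (fun s : ℝ => f (q + (s * r) • v))
        (r • pmul a₁ a₂ a₃ b₁ b₂ b₃ (f' (q + (t * r) • v)) v) t := by
      have := houter.scomp t h1; exact this
    have h3 : HasDerivAt (fun s : ℝ => (s * r) • w) (r • w) t := by
      simpa using (hasDerivAt_mul_const r).smul_const w
    have := h2.sub h3
    rw [← smul_sub] at this
    exact this.hasDerivWithinAt
  have hbound : ∀ t ∈ Set.Ico (0:ℝ) 1, ‖r • (pmul a₁ a₂ a₃ b₁ b₂ b₃ (f' (q + (t * r) • v)) v - w)‖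
      ≤ C * |r| := by
    intro t ht
    rw [norm_smul, Real.norm_eq_abs, mul_comm]
    exact mul_le_mul_of_nonneg_right (hb t (Set.mem_Icc_of_Ico ht)) (abs_nonneg r)
  have := norm_image_sub_le_of_norm_deriv_le_segment' hG hbound 1 (Set.right_mem_Icc.2 zero_le_one)
  simp only [hG_def, one_mul, zero_mul, zero_smul, add_zero, sub_zero, sub_zero] at this
  have heq : f (q + r • v) - r • w - f q = f (q + r • v) - f q - r • w := by abel
  rw [heq] at this
  simpa using this

lemma pmul_decompose (c y : ℝ × ℝ) :
    pmul a₁ a₂ a₃ b₁ b₂ b₃ c y =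
      y.1 • pmul a₁ a₂ a₃ b₁ b₂ b₃ c ((1:ℝ), (0:ℝ)) +
        y.2 • pmul a₁ a₂ a₃ b₁ b₂ b₃ c ((0:ℝ), (1:ℝ)) := by
  simp only [pmul, Prod.smul_mk, smul_eq_mul, Prod.mk_add_mk, Prod.mk.injEq]
  constructor <;> ring

lemma pN_e1 (hp : IsPerplexParam a₁ a₂ a₃ b₁ b₂ b₃) :
    pN a₁ a₂ a₃ b₁ b₂ b₃ ((1:ℝ), (0:ℝ)) ≠ 0 := by
  simp only [pN]
  simpa using hDne hp

lemma pN_e2 (hp : IsPerplexParam a₁ a₂ a₃ b₁ b₂ b₃) :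
    pN a₁ a₂ a₃ b₁ b₂ b₃ ((0:ℝ), (1:ℝ)) ≠ 0 := by
  simp only [pN]
  have := hQ hp
  intro hcon
  apply this
  nlinarith [hcon]

lemma hasFDerivAt_of_pdiff (hp : IsPerplexParam a₁ a₂ a₃ b₁ b₂ b₃)
    (hdiff : PDiff a₁ a₂ a₃ b₁ b₂ b₃ f f') (x : ℝ × ℝ) :
    HasFDerivAt f (Lmap a₁ a₂ a₃ b₁ b₂ b₃ (f' x)) x := by
  rw [hasFDerivAt_iff_isLittleO_nhds_zero, Asymptotics.isLittleO_iff]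
  intro ε hε
  set e₁ : ℝ × ℝ := ((1:ℝ), (0:ℝ)) with he₁
  set e₂ : ℝ × ℝ := ((0:ℝ), (1:ℝ)) with he₂
  have hg₁ : Continuous (fun y => pmul a₁ a₂ a₃ b₁ b₂ b₃ (f' y) e₁) :=
    (pmul_continuous_left e₁).comp hdiff.1
  have hg₂ : Continuous (fun y => pmul a₁ a₂ a₃ b₁ b₂ b₃ (f' y) e₂) :=
    (pmul_continuous_left e₂).comp hdiff.1
  obtain ⟨δ₁, hδ₁, hδ₁'⟩ := Metric.continuousAt_iff.1 hg₁.continuousAt (ε / 2) (by positivity)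
  obtain ⟨δ₂, hδ₂, hδ₂'⟩ := Metric.continuousAt_iff.1 hg₂.continuousAt (ε / 2) (by positivity)
  set δ : ℝ := min δ₁ δ₂ with hδ_def
  have hδ : 0 < δ := lt_min hδ₁ hδ₂
  have hd1 : δ ≤ δ₁ := min_le_left _ _
  have hd2 : δ ≤ δ₂ := min_le_right _ _
  filter_upwards [Metric.ball_mem_nhds (0 : ℝ × ℝ) (show (0:ℝ) < δ / 3 by positivity)] with h hh
  rw [Metric.mem_ball, dist_zero_right] at hh
  have hx1 : |h.1| ≤ ‖h‖ := by simpa using norm_fst_le h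
  have hx2 : |h.2| ≤ ‖h‖ := by simpa using norm_snd_le h
  have hne₁ : ‖e₁‖ ≤ 1 := by
    rw [he₁, Prod.norm_def]
    simp
  have hne₂ : ‖e₂‖ ≤ 1 := by
    rw [he₂, Prod.norm_def]
    simp
  -- Δ₁ estimate
  have est₁ : ‖f (x + h.1 • e₁) - f x - h.1 • pmul a₁ a₂ a₃ b₁ b₂ b₃ (f' x) e₁‖
      ≤ (ε / 2) * |h.1| := by
    refine segment_est hp hdiff (pN_e1 hp) x h.1 _ (by positivity) ?_
    intro t ht
    have : dist (x + (t * h.1) • e₁) x < δ₁ := by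
      rw [dist_eq_norm]
      simp only [add_sub_cancel_left]
      calc ‖(t * h.1) • e₁‖ = |t * h.1| * ‖e₁‖ := by rw [norm_smul, Real.norm_eq_abs]
        _ ≤ |h.1| * 1 := by
            apply mul_le_mul _ hne₁ (norm_nonneg _) (abs_nonneg _)
            rw [abs_mul]
            calc |t| * |h.1| ≤ 1 * |h.1| := by
                  apply mul_le_mul_of_nonneg_right _ (abs_nonneg _)
                  rw [abs_of_nonneg ht.1]; exact ht.2
              _ = |h.1| := one_mul _
        _ = |h.1| := mul_one _
        _ ≤ ‖h‖ := hx1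
        _ < δ / 3 := hh
        _ ≤ δ₁ := by linarith
    have := hδ₁' this
    rw [dist_eq_norm] at this
    exact le_of_lt this
  -- Δ₂ estimate
  have key2 : x + h.1 • e₁ + h.2 • e₂ = x + h := by
    rw [he₁, he₂]
    ext <;> simp
  have est₂ : ‖f (x + h.1 • e₁ + h.2 • e₂) - f (x + h.1 • e₁) -
      h.2 • pmul a₁ a₂ a₃ b₁ b₂ b₃ (f' x) e₂‖ ≤ (ε / 2) * |h.2| := by
    refine segment_est hp hdiff (pN_e2 hp) (x + h.1 • e₁) h.2 _ (by positivity) ?_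
    intro t ht
    have : dist (x + h.1 • e₁ + (t * h.2) • e₂) x < δ₂ := by
      rw [dist_eq_norm]
      have : x + h.1 • e₁ + (t * h.2) • e₂ - x = h.1 • e₁ + (t * h.2) • e₂ := by abel
      rw [this]
      calc ‖h.1 • e₁ + (t * h.2) • e₂‖ ≤ ‖h.1 • e₁‖ + ‖(t * h.2) • e₂‖ := norm_add_le _ _
        _ ≤ |h.1| * 1 + |t * h.2| * 1 := by
            gcongr
            · rw [norm_smul, Real.norm_eq_abs]
              exact mul_le_mul_of_nonneg_left hne₁ (abs_nonneg _)
            · rw [norm_smul, Real.norm_eq_abs]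
              exact mul_le_mul_of_nonneg_left hne₂ (abs_nonneg _)
        _ ≤ |h.1| + |h.2| := by
            rw [abs_mul]
            have : |t| * |h.2| ≤ 1 * |h.2| := by
              apply mul_le_mul_of_nonneg_right _ (abs_nonneg _)
              rw [abs_of_nonneg ht.1]; exact ht.2
            nlinarith [abs_nonneg h.1, abs_nonneg h.2]
        _ ≤ 2 * ‖h‖ := by linarith
        _ < 2 * (δ / 3) := by linarith
        _ ≤ δ₂ := by linarith
    have := hδ₂' this
    rw [dist_eq_norm] at this
    exact le_of_lt this
  -- assemble
  have hdecomp : f (x + h) - f x - Lmap a₁ a₂ a₃ b₁ b₂ b₃ (f' x) h =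
      (f (x + h.1 • e₁ + h.2 • e₂) - f (x + h.1 • e₁) -
        h.2 • pmul a₁ a₂ a₃ b₁ b₂ b₃ (f' x) e₂) +
      (f (x + h.1 • e₁) - f x - h.1 • pmul a₁ a₂ a₃ b₁ b₂ b₃ (f' x) e₁) := by
    rw [key2, Lmap_apply, pmul_decompose (y := h)]
    abel
  calc ‖f (x + h) - f x - Lmap a₁ a₂ a₃ b₁ b₂ b₃ (f' x) h‖
      ≤ (ε / 2) * |h.2| + (ε / 2) * |h.1| := by
        rw [hdecomp]
        exact le_trans (norm_add_le _ _) (add_le_add est₂ est₁)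
    _ ≤ (ε / 2) * ‖h‖ + (ε / 2) * ‖h‖ := by
        gcongr
    _ = ε * ‖h‖ := by ring

end Frechet

/-- Corollary 2.12: `x` is a critical point of `f` (as a real map) iff `f'(x)` is
not invertible for `*`, iff `N(f'(x)) = 0`. -/
theorem critical_point_iff (a₁ a₂ a₃ b₁ b₂ b₃ : ℝ)
    (hp : IsPerplexParam a₁ a₂ a₃ b₁ b₂ b₃)
    (f f' : ℝ × ℝ → ℝ × ℝ)
    (hdiff : PDiff a₁ a₂ a₃ b₁ b₂ b₃ f f') :
    ∀ x : ℝ × ℝ,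
      ((¬ Function.Bijective (fderiv ℝ f x)) ↔
        ¬ ∃ y : ℝ × ℝ, pmul a₁ a₂ a₃ b₁ b₂ b₃ (f' x) y = pone a₁ a₂ b₁ b₂) ∧
      ((¬ Function.Bijective (fderiv ℝ f x)) ↔ pN a₁ a₂ a₃ b₁ b₂ b₃ (f' x) = 0) := by
  intro x
  have hfd := (hasFDerivAt_of_pdiff hp hdiff x).fderiv
  rw [hfd]
  constructor
  · exact not_congr ((bij_iff hp _).trans (inv_iff hp _).symm)
  · exact (not_congr (bij_iff hp _)).trans not_not
end
end

section
/- For every real linear map L : ℝ² → ℝ² there exist a sequence of perplex parameters (aⁿ, bⁿ) and a sequence of real linear maps Lₙ = (uₙ, vₙ) : ℝ² → ℝ² such that Lₙ → L (convergence of the matrix entries) and each Lₙ satisfies the generalized Cauchy–Riemann equation for (aⁿ, bⁿ): with the product *ₙ defined by (aⁿ, bⁿ), (0,1) *ₙ (∂uₙ/∂x₁, ∂vₙ/∂x₁) = (1,0) *ₙ (∂uₙ/∂x₂, ∂vₙ/∂x₂) at every point. -/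
open Filter Topology

noncomputable section

/-- The linear map `(x,y) ↦ (p x + r y, q x + s y)`. -/
def mkL (p q r s : ℝ) : (ℝ × ℝ) →ₗ[ℝ] ℝ × ℝ where
  toFun v := (p * v.1 + r * v.2, q * v.1 + s * v.2)
  map_add' x y := by simp [Prod.ext_iff]; constructor <;> ring
  map_smul' c x := by simp [Prod.ext_iff]; constructor <;> ring

/-- Theorem 3.4 (ii): every real linear map `L : ℝ² → ℝ²` is the limit of linear
maps `Lₙ` satisfying the generalized Cauchy–Riemann equation for suitable perplex
parameters `(aⁿ, bⁿ)`. -/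
theorem linear_approx_by_perplex (L : (ℝ × ℝ) →ₗ[ℝ] ℝ × ℝ) :
    ∃ (a₁ a₂ a₃ b₁ b₂ b₃ : ℕ → ℝ) (Ln : ℕ → (ℝ × ℝ) →ₗ[ℝ] ℝ × ℝ),
      (∀ n, IsPerplexParam (a₁ n) (a₂ n) (a₃ n) (b₁ n) (b₂ n) (b₃ n)) ∧
      (∀ v : ℝ × ℝ, Tendsto (fun n => Ln n v) atTop (nhds (L v))) ∧
      ∀ n,
        pmul (a₁ n) (a₂ n) (a₃ n) (b₁ n) (b₂ n) (b₃ n) ((0, 1) : ℝ × ℝ)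
            (Ln n ((1, 0) : ℝ × ℝ)) =
          pmul (a₁ n) (a₂ n) (a₃ n) (b₁ n) (b₂ n) (b₃ n) ((1, 0) : ℝ × ℝ)
            (Ln n ((0, 1) : ℝ × ℝ)) := by
  set p := (L (1, 0)).1 with hp
  set q := (L (1, 0)).2 with hq
  set r := (L (0, 1)).1 with hr
  set s := (L (0, 1)).2 with hs
  have hdecomp : ∀ v : ℝ × ℝ, L v = (p * v.1 + r * v.2, q * v.1 + s * v.2) := by
    intro v
    have hv : v = v.1 • ((1, 0) : ℝ × ℝ) + v.2 • ((0, 1) : ℝ × ℝ) := by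
      simp [Prod.ext_iff]
    rw [hv, map_add, map_smul, map_smul]
    simp [Prod.ext_iff, hp, hq, hr, hs]
    constructor <;> ring
  -- choose perturbations
  have hex : ∀ n : ℕ, ∃ e : ℝ, 0 < e ∧ e ≤ 1 / (n + 1) ∧ q + e ≠ 0 ∧ r + 2 * e ≠ 0 ∧
      (r + 2 * e) + s - p - (q + e) ≠ 0 := by
    intro n
    have hpos : (0 : ℝ) < 1 / (n + 1) := by positivity
    have hinf : (Set.Ioc (0 : ℝ) (1 / (n + 1))).Infinite := Set.Ioc_infinite hpos
    have hfin : ({-q, -r / 2, p + q - s - r} : Set ℝ).Finite := by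
      apply Set.Finite.insert; apply Set.Finite.insert; exact Set.finite_singleton _
    obtain ⟨e, he⟩ := (hinf.diff hfin).nonempty
    obtain ⟨⟨he0, he1⟩, he2⟩ := he
    simp only [Set.mem_insert_iff, Set.mem_singleton_iff, not_or] at he2
    obtain ⟨h1, h2, h3⟩ := he2
    refine ⟨e, he0, he1, ?_, ?_, ?_⟩
    · intro h; apply h1; linarith
    · intro h; apply h2; linarith
    · intro h; apply h3; linarith
  choose e he0 he1 heq her hea using hex
  have he_lim : Tendsto e atTop (nhds 0) := by
    apply squeeze_zero (fun n => (he0 n).le) he1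
    exact tendsto_one_div_add_atTop_nhds_zero_nat
  set qn : ℕ → ℝ := fun n => q + e n with hqn_def
  set rn : ℕ → ℝ := fun n => r + 2 * e n with hrn_def
  have hqn : ∀ n, qn n ≠ 0 := heq
  have hrn : ∀ n, rn n ≠ 0 := her
  have hdn : ∀ n, rn n + s - p - qn n ≠ 0 := hea
  refine ⟨fun _ => 1, fun _ => 1, fun n => (rn n + s - p) / qn n,
    fun n => qn n / rn n, fun n => ((rn n + s - p) / qn n) * (qn n / rn n),
    fun n => ((rn n + s - p) / qn n) ^ 2 * (qn n / rn n) - ((rn n + s - p) / qn n - 1),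
    fun n => mkL p (qn n) (rn n) s, ?_, ?_, ?_⟩
  · intro n
    have h3 : (rn n + s - p) / qn n - 1 ≠ 0 := by
      rw [div_sub_one (hqn n)]
      exact div_ne_zero (hdn n) (hqn n)
    have hb1 : qn n / rn n ≠ 0 := div_ne_zero (hqn n) (hrn n)
    refine ⟨?_, ?_, by ring, by ring⟩
    · intro h; apply h3; linarith [h]
    · intro h
      apply mul_ne_zero h3 hb1
      rw [sub_mul] at *
      nlinarith [h]
  · intro v
    rw [hdecomp v]
    simp only [mkL, LinearMap.coe_mk, AddHom.coe_mk]
    apply Tendsto.prodMk_nhds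
    · have : Tendsto (fun n => rn n) atTop (nhds r) := by
        have := he_lim.const_mul (2 : ℝ)
        simpa [hrn_def] using (tendsto_const_nhds (x := r)).add (this)
      simpa using (tendsto_const_nhds (x := p * v.1)).add (this.mul_const v.2)
    · have : Tendsto (fun n => qn n) atTop (nhds q) := by
        simpa [hqn_def] using (tendsto_const_nhds (x := q)).add he_lim
      simpa using (this.mul_const v.1).add (tendsto_const_nhds (x := s * v.2))
  · intro n
    simp only [mkL, LinearMap.coe_mk, AddHom.coe_mk, pmul, Prod.mk.injEq]
    have h1 := hqn n
    have h2 := hrn n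
    constructor
    · field_simp
      ring
    · field_simp
      ring
end
end
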